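/- Let L_P1, L_P2, C be real matrices with [L_P1, L_P2; L_P2ᵀ, C] ≻ 0, and let S ≻ 0 be a larger symmetric matrix whose top-left block of S⁻¹ equals C⁻¹. Then the block matrix [L_P1, (L_P2, 0); (L_P2, 0)ᵀ, S] is positive definite. -/

import Mathlib

open Matrix

section aux

variable {m n : Type*} [Fintype m] [Fintype n] [DecidableEq n]

/-- PosDef version of `fromBlocks₂₂` over ℝ: if `D` and the Schur complement are
positive definite, so is the block matrix. -/
lemma posDef_fromBlocks₂₂_of_schur (A : Matrix m m ℝ) (B : Matrix m n ℝ)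
    {D : Matrix n n ℝ} (hD : D.PosDef) [Invertible D]
    (h : (A - B * D⁻¹ * Bᵀ).PosDef) :
    (Matrix.fromBlocks A B Bᵀ D).PosDef := by
  have hBH : Bᴴ = Bᵀ := conjTranspose_eq_transpose_of_trivial B
  have hherm : (Matrix.fromBlocks A B Bᵀ D).IsHermitian := by
    rw [← hBH, Matrix.IsHermitian.fromBlocks₂₂ _ _ hD.1, hBH]
    exact h.1
  refine PosDef.of_dotProduct_mulVec_pos hherm fun x hx => ?_
  have hx' : x = (x ∘ Sum.inl) ⊕ᵥ (x ∘ Sum.inr) := (Sum.elim_comp_inl_inr x).symm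
  rw [dotProduct_mulVec, hx']
  have key := schur_complement_eq₂₂ (α := ℝ) A B (x ∘ Sum.inl) (x ∘ Sum.inr) hD.1
  rw [hBH] at key
  rw [key]
  rcases eq_or_ne (x ∘ Sum.inl) 0 with h1 | h1
  · have h2 : (D⁻¹ * Bᵀ) *ᵥ (x ∘ Sum.inl) + (x ∘ Sum.inr) ≠ 0 := by
      rw [h1, mulVec_zero, zero_add]
      intro h2
      apply hx
      rw [hx', h1, h2]
      ext (i | i) <;> simp
    have t1 : 0 < star ((D⁻¹ * Bᵀ) *ᵥ (x ∘ Sum.inl) + (x ∘ Sum.inr)) ᵥ* D ⬝ᵥ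
        ((D⁻¹ * Bᵀ) *ᵥ (x ∘ Sum.inl) + (x ∘ Sum.inr)) := by
      rw [← dotProduct_mulVec]; exact hD.dotProduct_mulVec_pos h2
    have t2 : 0 ≤ star (x ∘ Sum.inl) ᵥ* (A - B * D⁻¹ * Bᵀ) ⬝ᵥ (x ∘ Sum.inl) := by
      rw [← dotProduct_mulVec]; exact h.posSemidef.dotProduct_mulVec_nonneg _
    linarith
  · have t1 : 0 ≤ star ((D⁻¹ * Bᵀ) *ᵥ (x ∘ Sum.inl) + (x ∘ Sum.inr)) ᵥ* D ⬝ᵥ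
        ((D⁻¹ * Bᵀ) *ᵥ (x ∘ Sum.inl) + (x ∘ Sum.inr)) := by
      rw [← dotProduct_mulVec]; exact hD.posSemidef.dotProduct_mulVec_nonneg _
    have t2 : 0 < star (x ∘ Sum.inl) ᵥ* (A - B * D⁻¹ * Bᵀ) ⬝ᵥ (x ∘ Sum.inl) := by
      rw [← dotProduct_mulVec]; exact h.dotProduct_mulVec_pos h1
    linarith

end aux

theorem stmt_18 (a c e : ℕ)
    (LP1 : Matrix (Fin a) (Fin a) ℝ) (LP2 : Matrix (Fin a) (Fin c) ℝ)
    (C : Matrix (Fin c) (Fin c) ℝ)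
    (hpos : (Matrix.fromBlocks LP1 LP2 LP2ᵀ C).PosDef)
    (S : Matrix (Fin c ⊕ Fin e) (Fin c ⊕ Fin e) ℝ)
    (hS : S.PosDef) (hS11 : (S⁻¹).toBlocks₁₁ = C⁻¹) :
    (Matrix.fromBlocks LP1
      (Matrix.of fun i (q : Fin c ⊕ Fin e) => Sum.elim (LP2 i) (fun _ => (0 : ℝ)) q)
      (Matrix.of fun i (q : Fin c ⊕ Fin e) => Sum.elim (LP2 i) (fun _ => (0 : ℝ)) q)ᵀ
      S).PosDef := by
  set B : Matrix (Fin a) (Fin c ⊕ Fin e) ℝ :=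
    Matrix.of fun i (q : Fin c ⊕ Fin e) => Sum.elim (LP2 i) (fun _ => (0 : ℝ)) q with hB
  -- C is positive definite
  have hC : C.PosDef := by
    refine PosDef.of_dotProduct_mulVec_pos ?_ fun y hy => ?_
    · have := hpos.1
      rw [Matrix.isHermitian_fromBlocks_iff] at this
      exact this.2.2.2
    · have := hpos.dotProduct_mulVec_pos (x := (0 : Fin a → ℝ) ⊕ᵥ y) (by
        intro h
        apply hy
        ext i
        have := congrFun h (Sum.inr i)
        simpa using this)
      simpa [Matrix.fromBlocks_mulVec] using this
  haveI : Invertible C := hC.isUnit.invertible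
  haveI : Invertible S := hS.isUnit.invertible
  -- Schur complement of original block matrix
  have hschur : (LP1 - LP2 * C⁻¹ * LP2ᵀ).PosDef := by
    refine PosDef.of_dotProduct_mulVec_pos ?_ fun x hx => ?_
    · have h1 := hpos.1
      rw [Matrix.isHermitian_fromBlocks_iff] at h1
      have : (LP2 * C⁻¹ * LP2ᵀ).IsHermitian := by
        have := Matrix.isHermitian_mul_mul_conjTranspose (B := LP2) hC.1.inv
        simpa using this
      exact h1.1.sub this
    · have key := Matrix.schur_complement_eq₂₂ (α := ℝ) LP1 LP2
        (D := C) x (-((C⁻¹ * LP2ᵀ) *ᵥ x)) hC.1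
      rw [conjTranspose_eq_transpose_of_trivial] at key
      rw [add_neg_cancel] at key
      have hne : x ⊕ᵥ (-((C⁻¹ * LP2ᵀ) *ᵥ x)) ≠ 0 := by
        intro h
        apply hx
        ext i
        have := congrFun h (Sum.inl i)
        simpa using this
      have := hpos.dotProduct_mulVec_pos hne
      rw [dotProduct_mulVec, key] at this
      rw [dotProduct_mulVec]
      simpa using this
  -- B * S⁻¹ * Bᵀ = LP2 * C⁻¹ * LP2ᵀ
  have hBSB : B * S⁻¹ * Bᵀ = LP2 * C⁻¹ * LP2ᵀ := by
    ext i j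
    simp only [Matrix.mul_apply, Matrix.transpose_apply, hB, Matrix.of_apply,
      Fintype.sum_sum_type, Sum.elim_inl, Sum.elim_inr, zero_mul, mul_zero,
      Finset.sum_const_zero, add_zero, Finset.sum_add_distrib]
    have hinv : ∀ k l, S⁻¹ (Sum.inl k) (Sum.inl l) = C⁻¹ k l := fun k l => by
      rw [← hS11]; rfl
    simp only [hinv]
  apply posDef_fromBlocks₂₂_of_schur _ _ hS
  rw [hBSB]
  exact hschur
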